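/- Suppose |m| − k + 1 < 0, i.e., |m| < k − 1. Then the linear map f_{k,m} : V_{k−1} → V_k is injective and the dimension of its cokernel equals C(n+k−2, k). -/

import Mathlib

open Finsupp

/-- Multiindices `J : Fin n → ℕ` of total degree `j`. -/
abbrev MIdx (n j : ℕ) : Type := {J : Fin n → ℕ // ∑ i, J i = j}

/-- The complex vector space `V_j` with basis `{e_J : |J| = j}`. -/
abbrev V (n j : ℕ) : Type := MIdx n j →₀ ℂ

/-- `J + 1ᵢ` : the multiindex `J` with its `i`-th entry increased by 1. -/
def incr {n : ℕ} (J : Fin n → ℕ) (i : Fin n) : Fin n → ℕ :=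
  Function.update J i (J i + 1)

lemma sum_incr {n : ℕ} (J : Fin n → ℕ) (i : Fin n) :
    ∑ x, incr J i x = (∑ x, J x) + 1 := by
  unfold incr
  rw [Finset.sum_update_of_mem (Finset.mem_univ i),
    Finset.sum_eq_sum_sdiff_singleton_add (Finset.mem_univ i) J]
  ring

/-- The map `f_{j+1,m} : V_j → V_{j+1}`, `e_J ↦ ∑ᵢ (jᵢ+1)(mᵢ−jᵢ) e_{J+1ᵢ}`. -/
noncomputable def fMap (n : ℕ) (m : Fin n → ℕ) (j : ℕ) : V n j →ₗ[ℂ] V n (j + 1) :=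
  Finsupp.lift (V n (j + 1)) ℂ (MIdx n j) fun J =>
    ∑ i, (((J.1 i : ℂ) + 1) * ((m i : ℂ) - (J.1 i : ℂ))) •
      Finsupp.single (⟨incr J.1 i, by rw [sum_incr, J.2]⟩ : MIdx n (j + 1)) (1 : ℂ)

/-- `d(m,j)`: the number of multiindices `J` with `J i ≤ m i` for all `i` and `|J| = j`. -/
noncomputable def dCount (n : ℕ) (m : Fin n → ℕ) (j : ℤ) : ℕ :=
  Set.ncard {J : Fin n → ℕ | (∀ i, J i ≤ m i) ∧ ∑ i, (J i : ℤ) = j}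

/-- `w(m,j) = d(m,j) − d(m,j−1)`. -/
noncomputable def w (n : ℕ) (m : Fin n → ℕ) (j : ℤ) : ℤ :=
  (dCount n m j : ℤ) - (dCount n m (j - 1) : ℤ)

def decr {n : ℕ} (J : Fin n → ℕ) (i : Fin n) : Fin n → ℕ :=
  Function.update J i (J i - 1)
lemma sum_decr {n : ℕ} (J : Fin n → ℕ) (i : Fin n) (h : 0 < J i) :
    ∑ x, decr J i x = (∑ x, J x) - 1 := by
  unfold decr
  rw [Finset.sum_update_of_mem (Finset.mem_univ i),
    Finset.sum_eq_sum_sdiff_singleton_add (Finset.mem_univ i) J]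
  omega
noncomputable def eMap (n j : ℕ) : V n (j + 1) →ₗ[ℂ] V n j :=
  Finsupp.lift (V n j) ℂ (MIdx n (j+1)) fun J =>
    ∑ i, if h : 0 < J.1 i then
      Finsupp.single (⟨decr J.1 i, by rw [sum_decr _ _ h, J.2]; rfl⟩ : MIdx n j) (1 : ℂ)
    else 0
lemma fMap_single (n : ℕ) (m : Fin n → ℕ) (j : ℕ) (J : MIdx n j) (b : ℂ) :
    fMap n m j (Finsupp.single J b) =
    b • ∑ i, (((J.1 i : ℂ) + 1) * ((m i : ℂ) - (J.1 i : ℂ))) •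
      Finsupp.single (⟨incr J.1 i, by rw [sum_incr, J.2]⟩ : MIdx n (j + 1)) (1 : ℂ) := by
  rw [fMap, Finsupp.lift_apply, Finsupp.sum_single_index]
  simp
lemma eMap_single (n j : ℕ) (J : MIdx n (j+1)) (b : ℂ) :
    eMap n j (Finsupp.single J b) =
    b • ∑ i, if h : 0 < J.1 i then
      Finsupp.single (⟨decr J.1 i, by rw [sum_decr _ _ h, J.2]; rfl⟩ : MIdx n j) (1 : ℂ)
    else 0 := by
  rw [eMap, Finsupp.lift_apply, Finsupp.sum_single_index]
  simp

-- helper identities on multiindices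
lemma decr_incr {n : ℕ} (J : Fin n → ℕ) (i : Fin n) : decr (incr J i) i = J := by
  unfold incr decr
  rw [Function.update_idem, Function.update_self]
  simp [Function.update_eq_self]

lemma incr_decr {n : ℕ} (J : Fin n → ℕ) (i : Fin n) (h : 0 < J i) :
    incr (decr J i) i = J := by
  unfold incr decr
  rw [Function.update_idem, Function.update_self]
  have : J i - 1 + 1 = J i := by omega
  simp [this, Function.update_eq_self]

lemma decr_incr_comm {n : ℕ} (J : Fin n → ℕ) {i l : Fin n} (hil : i ≠ l) :
    decr (incr J i) l = incr (decr J l) i := by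
  unfold incr decr
  rw [Function.update_of_ne (Ne.symm hil), Function.update_of_ne hil,
    Function.update_comm hil]

lemma double_sum_split {M : Type*} [AddCommGroup M] {n : ℕ} (A B : Fin n → Fin n → M)
    (hAB : ∀ i l, i ≠ l → A i l = B l i) :
    ∑ i, ∑ l, A i l = (∑ i, ∑ l, B i l) + ∑ i, (A i i - B i i) := by
  conv_rhs => rw [Finset.sum_comm]
  rw [← Finset.sum_add_distrib]
  refine Finset.sum_congr rfl fun i _ => ?_
  rw [Finset.sum_eq_sum_sdiff_singleton_add (Finset.mem_univ i) (A i),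
      Finset.sum_eq_sum_sdiff_singleton_add (Finset.mem_univ i) (fun l => B l i)]
  rw [Finset.sum_congr rfl (fun l hl => hAB i l
    (by simp only [Finset.mem_sdiff, Finset.mem_singleton] at hl; exact fun e => hl.2 e.symm))]
  abel

lemma key_single (n : ℕ) (m : Fin n → ℕ) (j : ℕ) (J : MIdx n (j+1)) :
    eMap n (j+1) (fMap n m (j+1) (Finsupp.single J 1)) =
    fMap n m j (eMap n j (Finsupp.single J 1)) +
      ((∑ i, (m i : ℂ)) - 2*((j:ℂ)+1)) • Finsupp.single J 1 := by
  have hL : eMap n (j+1) (fMap n m (j+1) (Finsupp.single J 1)) =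
      ∑ i, ∑ l, ((((J.1 i : ℂ) + 1) * ((m i : ℂ) - (J.1 i : ℂ))) •
        if h : 0 < incr J.1 i l then
          Finsupp.single (⟨decr (incr J.1 i) l,
            by rw [sum_decr _ _ h, sum_incr, J.2]; rfl⟩ : MIdx n (j+1)) (1:ℂ)
        else 0) := by
    rw [fMap_single, one_smul, map_sum]
    refine Finset.sum_congr rfl fun i _ => ?_
    rw [map_smul, eMap_single, one_smul, Finset.smul_sum]
  have hR : fMap n m j (eMap n j (Finsupp.single J 1)) =
      ∑ i, ∑ l, (if h : 0 < J.1 i then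
          ((((decr J.1 i) l : ℂ) + 1) * ((m l : ℂ) - ((decr J.1 i) l : ℂ))) •
          Finsupp.single (⟨incr (decr J.1 i) l,
            by rw [sum_incr, sum_decr _ _ h, J.2]; rfl⟩ : MIdx n (j+1)) (1:ℂ)
        else 0) := by
    rw [eMap_single, one_smul, map_sum]
    refine Finset.sum_congr rfl fun i _ => ?_
    by_cases h : 0 < J.1 i
    · rw [dif_pos h, fMap_single, one_smul]
      exact Finset.sum_congr rfl fun l _ => by rw [dif_pos h]
    · simp [dif_neg h]
  rw [hL, hR]
  refine (double_sum_split _ (fun i l => if h : 0 < J.1 i then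
          ((((decr J.1 i) l : ℂ) + 1) * ((m l : ℂ) - ((decr J.1 i) l : ℂ))) •
          Finsupp.single (⟨incr (decr J.1 i) l,
            by rw [sum_incr, sum_decr _ _ h, J.2]; rfl⟩ : MIdx n (j+1)) (1:ℂ)
        else 0) ?_).trans ?_
  · -- off-diagonal terms agree
    intro i l hil
    by_cases h : 0 < J.1 l
    · have h' : 0 < incr J.1 i l := by
        rwa [incr, Function.update_of_ne (Ne.symm hil)]
      rw [dif_pos h', dif_pos h]
      have hv : decr (incr J.1 i) l = incr (decr J.1 l) i := decr_incr_comm J.1 hil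
      have hc : (decr J.1 l) i = J.1 i := Function.update_of_ne hil _ _
      simp only [hv, hc]
    · have h' : ¬ 0 < incr J.1 i l := by
        rwa [incr, Function.update_of_ne (Ne.symm hil)]
      rw [dif_neg h', dif_neg h, smul_zero]
  · -- diagonal terms give the scalar
    congr 1
    have hterm : ∀ i : Fin n,
        (((((J.1 i : ℂ) + 1) * ((m i : ℂ) - (J.1 i : ℂ))) •
          (if h : 0 < incr J.1 i i then
            Finsupp.single (⟨decr (incr J.1 i) i,
              by rw [sum_decr _ _ h, sum_incr, J.2]; rfl⟩ : MIdx n (j+1)) (1:ℂ)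
          else 0)) -
         (if h : 0 < J.1 i then
          ((((decr J.1 i) i : ℂ) + 1) * ((m i : ℂ) - ((decr J.1 i) i : ℂ))) •
          Finsupp.single (⟨incr (decr J.1 i) i,
            by rw [sum_incr, sum_decr _ _ h, J.2]; rfl⟩ : MIdx n (j+1)) (1:ℂ)
        else 0))
        = (((m i : ℂ) - 2*(J.1 i : ℂ))) • Finsupp.single J (1:ℂ) := by
      intro i
      have hii : 0 < incr J.1 i i := by simp [incr]
      rw [dif_pos hii]
      have h1 : (⟨decr (incr J.1 i) i, by rw [sum_decr _ _ hii, sum_incr, J.2]; rfl⟩ : MIdx n (j+1)) = J :=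
        Subtype.ext (decr_incr J.1 i)
      rw [h1]
      by_cases h : 0 < J.1 i
      · rw [dif_pos h]
        have h2 : (⟨incr (decr J.1 i) i, by rw [sum_incr, sum_decr _ _ h, J.2]; rfl⟩ : MIdx n (j+1)) = J :=
          Subtype.ext (incr_decr J.1 i h)
        rw [h2]
        have h3 : ((decr J.1 i) i : ℂ) = (J.1 i : ℂ) - 1 := by
          rw [decr, Function.update_self, Nat.cast_sub h]
          norm_num
        rw [h3, ← sub_smul]
        congr 1
        ring
      · rw [dif_neg h, sub_zero]
        have h0 : (J.1 i : ℂ) = 0 := by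
          simp [Nat.eq_zero_of_not_pos h]
        rw [h0]
        congr 1
        ring
    rw [Finset.sum_congr rfl (fun i _ => hterm i), ← Finset.sum_smul]
    congr 1
    have hsum : (∑ i, (J.1 i:ℂ)) = (j:ℂ) + 1 := by
      rw [← Nat.cast_sum, J.2]
      push_cast
      ring
    rw [Finset.sum_sub_distrib, ← Finset.mul_sum, hsum]

open Polynomial

noncomputable def Tend (n : ℕ) (m : Fin n → ℕ) (j : ℕ) : Module.End ℂ (V n j) :=
  (eMap n j).comp (fMap n m j)

noncomputable def hval (n : ℕ) (m : Fin n → ℕ) (t : ℕ) : ℂ := (∑ i, (m i : ℂ)) - 2*t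

lemma key (n : ℕ) (m : Fin n → ℕ) (j : ℕ) :
    Tend n m (j+1) = (fMap n m j).comp (eMap n j)
      + hval n m (j+1) • (1 : Module.End ℂ (V n (j+1))) := by
  apply Finsupp.lhom_ext
  intro J b
  have hb : (Finsupp.single J b : V n (j+1)) = b • Finsupp.single J 1 := by
    rw [Finsupp.smul_single', mul_one]
  rw [hb, map_smul, map_smul]
  have h1 : (Tend n m (j+1)) (Finsupp.single J 1)
      = eMap n (j+1) (fMap n m (j+1) (Finsupp.single J 1)) := rfl
  rw [h1, key_single]
  have h2 : ((fMap n m j).comp (eMap n j)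
      + hval n m (j+1) • (1 : Module.End ℂ (V n (j+1)))) (Finsupp.single J 1)
      = fMap n m j (eMap n j (Finsupp.single J 1)) + hval n m (j+1) • Finsupp.single J 1 := by
    simp [LinearMap.add_apply, LinearMap.smul_apply]
  rw [h2]
  have h3 : hval n m (j+1) = (∑ i, (m i : ℂ)) - 2*((j:ℂ)+1) := by
    rw [hval]; push_cast; ring
  rw [h3]

lemma Tend_zero (n : ℕ) (m : Fin n → ℕ) :
    Tend n m 0 = hval n m 0 • (1 : Module.End ℂ (V n 0)) := by
  apply Finsupp.lhom_ext
  intro J b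
  have hJ : ∀ x, J.1 x = 0 := by
    intro x
    have h2 := J.2
    exact Finset.sum_eq_zero_iff.mp h2 x (Finset.mem_univ x)
  have h1 : (Tend n m 0) (Finsupp.single J b)
      = eMap n 0 (fMap n m 0 (Finsupp.single J b)) := rfl
  rw [h1, fMap_single, map_smul, map_sum]
  have hinner : ∀ i : Fin n,
      eMap n 0 ((((J.1 i : ℂ) + 1) * ((m i : ℂ) - (J.1 i : ℂ))) •
        Finsupp.single (⟨incr J.1 i, by rw [sum_incr, J.2]⟩ : MIdx n 1) (1:ℂ))
      = (m i : ℂ) • Finsupp.single J 1 := by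
    intro i
    rw [map_smul, eMap_single, one_smul]
    rw [Finset.sum_eq_single_of_mem i (Finset.mem_univ i)
      (fun l _ hl => by
        rw [dif_neg]
        show ¬ 0 < incr J.1 i l
        rw [incr, Function.update_of_ne hl, hJ l]
        omega)]
    have hii : 0 < incr J.1 i i := by simp [incr]
    rw [dif_pos hii]
    have he : (⟨decr (incr J.1 i) i, by rw [sum_decr _ _ hii, sum_incr, J.2]⟩ : MIdx n 0) = J :=
      Subtype.ext (decr_incr J.1 i)
    rw [he, hJ i]
    norm_num
  rw [Finset.sum_congr rfl (fun i _ => hinner i), ← Finset.sum_smul]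
  have : (hval n m 0 • (1 : Module.End ℂ (V n 0))) (Finsupp.single J b)
      = hval n m 0 • Finsupp.single J b := rfl
  rw [this, hval]
  push_cast
  rw [smul_comm]
  norm_num

lemma comm_poly {M M' : Type*} [AddCommGroup M] [Module ℂ M] [AddCommGroup M'] [Module ℂ M']
    (G : Module.End ℂ M') (T : Module.End ℂ M) (F : M →ₗ[ℂ] M')
    (hc : G.comp F = F.comp T) (p : Polynomial ℂ) :
    (Polynomial.aeval G p).comp F = F.comp (Polynomial.aeval T p) := by
  have hpow : ∀ N : ℕ, (G^N).comp F = F.comp (T^N) := by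
    intro N
    induction N with
    | zero => exact (LinearMap.comp_id F).trans (LinearMap.id_comp F).symm
    | succ N ih =>
      rw [pow_succ', pow_succ', Module.End.mul_eq_comp, Module.End.mul_eq_comp,
        LinearMap.comp_assoc, ih, ← LinearMap.comp_assoc, hc, LinearMap.comp_assoc]
  induction p using Polynomial.induction_on' with
  | add p q hp hq => simp only [map_add, LinearMap.add_comp, LinearMap.comp_add, hp, hq]
  | monomial k a =>
    simp only [Polynomial.aeval_monomial, Algebra.algebraMap_eq_smul_one, smul_mul_assoc,
      one_mul, LinearMap.smul_comp, LinearMap.comp_smul, hpow]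

noncomputable def aval (n : ℕ) (m : Fin n → ℕ) (j s : ℕ) : ℂ :=
  ((j:ℂ) - s + 1) * ((∑ i, (m i : ℂ)) - ((j:ℂ) + s))

noncomputable def PP (n : ℕ) (m : Fin n → ℕ) : ℕ → Polynomial ℂ
  | 0 => X - C (aval n m 0 0)
  | (j+1) => (PP n m j).comp (X - C (hval n m (j+1))) * (X - C (hval n m (j+1)))

lemma aval_succ (n : ℕ) (m : Fin n → ℕ) (j s : ℕ) :
    aval n m (j+1) s = aval n m j s + hval n m (j+1) := by
  unfold aval hval; push_cast; ring

lemma aval_diag (n : ℕ) (m : Fin n → ℕ) (j : ℕ) :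
    aval n m (j+1) (j+1) = hval n m (j+1) := by
  unfold aval hval; push_cast; ring

lemma aval_zero (n : ℕ) (m : Fin n → ℕ) : aval n m 0 0 = hval n m 0 := by
  unfold aval hval; push_cast; ring

lemma PP_eq (n : ℕ) (m : Fin n → ℕ) (j : ℕ) :
    PP n m j = ∏ s ∈ Finset.range (j+1), (X - C (aval n m j s)) := by
  induction j with
  | zero => simp [PP]
  | succ j ih =>
    rw [PP, ih]
    conv_rhs => rw [Finset.prod_range_succ]
    congr 1
    · rw [comp_eq_aeval, map_prod]
      refine Finset.prod_congr rfl fun s hs => ?_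
      rw [map_sub, Polynomial.aeval_X, Polynomial.aeval_C, aval_succ]
      simp only [Polynomial.algebraMap_eq, map_add]
      ring
    · rw [aval_diag]

lemma aeval_PP (n : ℕ) (m : Fin n → ℕ) (j : ℕ) :
    Polynomial.aeval (Tend n m j) (PP n m j) = 0 := by
  induction j with
  | zero =>
    show Polynomial.aeval (Tend n m 0) (X - C (aval n m 0 0)) = 0
    rw [map_sub, Polynomial.aeval_X, Polynomial.aeval_C, Tend_zero, aval_zero,
      Algebra.algebraMap_eq_smul_one, sub_self]
  | succ j ih =>
    show Polynomial.aeval (Tend n m (j+1))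
      ((PP n m j).comp (X - C (hval n m (j+1))) * (X - C (hval n m (j+1)))) = 0
    rw [map_mul]
    have h2 : Polynomial.aeval (Tend n m (j+1)) (X - C (hval n m (j+1)))
        = (fMap n m j) ∘ₗ (eMap n j) := by
      rw [map_sub, Polynomial.aeval_X, Polynomial.aeval_C, key,
        Algebra.algebraMap_eq_smul_one]
      abel
    have hcomm : ((fMap n m j) ∘ₗ (eMap n j)) ∘ₗ (fMap n m j)
        = (fMap n m j) ∘ₗ (Tend n m j) := by
      rw [LinearMap.comp_assoc]; rfl
    have h3 : (Polynomial.aeval (Tend n m (j+1))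
          ((PP n m j).comp (X - C (hval n m (j+1))))) ∘ₗ (fMap n m j)
        = (fMap n m j) ∘ₗ (Polynomial.aeval (Tend n m j) (PP n m j)) := by
      rw [Polynomial.aeval_comp, h2]
      exact comm_poly _ _ _ hcomm _
    rw [h2, Module.End.mul_eq_comp, ← LinearMap.comp_assoc, h3, ih,
      LinearMap.comp_zero, LinearMap.zero_comp]

lemma MIdx.finite (n j : ℕ) : Finite (MIdx n j) := by
  apply Finite.of_injective (fun J => (fun i => (⟨J.1 i, by
    have := Finset.single_le_sum (f := J.1) (fun i _ => Nat.zero_le _) (Finset.mem_univ i)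
    omega⟩ : Fin (j+1))))
  intro J K h
  ext i
  exact congrArg Fin.val (congrFun h i)

noncomputable instance (n j : ℕ) : Fintype (MIdx n j) :=
  @Fintype.ofFinite _ (MIdx.finite n j)

lemma card_MIdx (n j : ℕ) : Fintype.card (MIdx n j) = (n + j - 1).choose j := by
  rw [← Fintype.card_congr (Sym.equivNatSumOfFintype (Fin n) j)]
  rw [Sym.card_sym_eq_choose, Fintype.card_fin]

instance (n j : ℕ) : FiniteDimensional ℂ (V n j) :=
  Module.Finite.of_basis (Finsupp.basisSingleOne (ι := MIdx n j) (R := ℂ))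

lemma finrank_V (n j : ℕ) : Module.finrank ℂ (V n j) = (n + j - 1).choose j := by
  rw [Module.finrank_eq_card_basis (Finsupp.basisSingleOne (ι := MIdx n j) (R := ℂ)), card_MIdx]


/-- If `|m| − k + 1 < 0`, then `f_{k,m} : V_{k−1} → V_k` is injective and
`dim coker f_{k,m} = C(n+k−2, k)`. -/
theorem injective_coker_of_small_weight (n k : ℕ) (hn : 1 ≤ n) (hk : 1 ≤ k) (m : Fin n → ℕ)
    (h : (∑ i, (m i : ℤ)) - k + 1 < 0) :
    Function.Injective (fMap n m (k - 1)) ∧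
    Module.finrank ℂ (V n (k - 1 + 1) ⧸ LinearMap.range (fMap n m (k - 1)))
      = Nat.choose (n + k - 2) k := by
  have hsum : (∑ i, (m i : ℤ)) = ((∑ i, m i : ℕ) : ℤ) := by push_cast; ring
  have hMlt : (∑ i, m i) + 1 < k := by
    rw [hsum] at h; omega
  have hroots : ∀ s ∈ Finset.range (k-1+1), aval n m (k-1) s ≠ 0 := by
    intro s hs
    rw [Finset.mem_range] at hs
    unfold aval
    apply mul_ne_zero
    · have e1 : ((k-1:ℕ):ℂ) - (s:ℂ) + 1 = ((k-1+1:ℕ):ℂ) - ((s:ℕ):ℂ) := by push_cast; ring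
      rw [e1, sub_ne_zero]
      exact fun e => absurd (Nat.cast_injective e) (by omega)
    · have e2 : (∑ i, (m i:ℂ)) - (((k-1:ℕ):ℂ) + (s:ℂ))
          = ((∑ i, m i : ℕ):ℂ) - ((k-1+s:ℕ):ℂ) := by push_cast; ring
      rw [e2, sub_ne_zero]
      exact fun e => absurd (Nat.cast_injective e) (by omega)
  have hc0 : (PP n m (k-1)).coeff 0 ≠ 0 := by
    rw [Polynomial.coeff_zero_eq_eval_zero, PP_eq, Polynomial.eval_prod]
    rw [Finset.prod_ne_zero_iff]
    intro s hs
    rw [Polynomial.eval_sub, Polynomial.eval_X, Polynomial.eval_C, zero_sub, neg_ne_zero]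
    exact hroots s hs
  have hinj : Function.Injective (fMap n m (k - 1)) := by
    rw [← LinearMap.ker_eq_bot]
    apply LinearMap.ker_eq_bot'.mpr
    intro v hv
    have hT : Tend n m (k-1) v = 0 := by
      show eMap n (k-1) (fMap n m (k-1) v) = 0
      rw [hv, map_zero]
    have hdecomp : PP n m (k-1)
        = (PP n m (k-1)).divX * X + C ((PP n m (k-1)).coeff 0) := by
      rw [mul_comm, Polynomial.X_mul_divX_add]
    have h4 : Polynomial.aeval (Tend n m (k-1)) (PP n m (k-1)) v
        = ((PP n m (k-1)).coeff 0) • v := by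
      conv_lhs => rw [hdecomp]
      rw [map_add, map_mul, Polynomial.aeval_X, Polynomial.aeval_C]
      rw [LinearMap.add_apply, Module.End.mul_apply, hT, map_zero, zero_add,
        Algebra.algebraMap_eq_smul_one, LinearMap.smul_apply, Module.End.one_apply]
    rw [aeval_PP, LinearMap.zero_apply] at h4
    rcases smul_eq_zero.mp h4.symm with hc | hv0
    · exact absurd hc hc0
    · exact hv0
  refine ⟨hinj, ?_⟩
  obtain ⟨t, rfl⟩ : ∃ t, k = t + 2 := ⟨k - 2, by omega⟩
  have hq := Submodule.finrank_quotient_add_finrank (LinearMap.range (fMap n m (t+2-1)))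
  have hr : Module.finrank ℂ (LinearMap.range (fMap n m (t+2-1)))
      = Module.finrank ℂ (V n (t+2-1)) := LinearMap.finrank_range_of_inj hinj
  have h5 : Module.finrank ℂ (V n (t+2-1)) = (n + t).choose (t+1) := by
    have := finrank_V n (t+1)
    simpa using this
  have h6 : Module.finrank ℂ (V n (t+2-1+1)) = (n + t + 1).choose (t+2) := by
    rw [show t + 2 - 1 + 1 = t + 2 by omega, finrank_V, show n + (t + 2) - 1 = n + t + 1 by omega]
  have hpascal : (n + t + 1).choose (t+2) = (n+t).choose (t+1) + (n+t).choose (t+2) :=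
    Nat.choose_succ_succ (n+t) (t+1)
  have hgoal : (n + (t+2) - 2).choose (t+2) = (n+t).choose (t+2) := by
    congr 1 <;> omega
  rw [h6] at hq
  rw [hr, h5] at hq
  omega
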